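/- There exist two nonnegative functions q, q' : Fin 4 × Fin 4 → ℝ, each summing to 1, which induce the same observed quantities P(Y=0,S=0|T=0), P(Y=1,S=0|T=0), P(Y=0,S=1|T=0), P(S=0|T=1), and the same γ = ACE(S→Y) = 0.2 > 0, but such that ACE(T→Y) computed from q equals 0.14 > 0 while ACE(T→Y) computed from q' equals −0.10 < 0. -/
import Mathlib


/- Strong-surrogate potential-outcome-type model: `q (i, j)` is the proportion of the
type with `(S_{T=0}, S_{T=1})` given by the binary expansion of `i` and
`(Y_{S=0}, Y_{S=1})` given by the binary expansion of `j`. -/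

/-- `P(Y=0, S=0 | T=0)` -/
noncomputable def pA (q : Fin 4 × Fin 4 → ℝ) : ℝ := q (0, 0) + q (0, 1) + q (1, 0) + q (1, 1)

/-- `P(Y=1, S=0 | T=0)` -/
noncomputable def pB (q : Fin 4 × Fin 4 → ℝ) : ℝ := q (0, 2) + q (0, 3) + q (1, 2) + q (1, 3)

/-- `P(Y=0, S=1 | T=0)` -/
noncomputable def pC (q : Fin 4 × Fin 4 → ℝ) : ℝ := q (2, 0) + q (2, 2) + q (3, 0) + q (3, 2)

/-- `P(Y=1, S=1 | T=0)` -/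
noncomputable def pD (q : Fin 4 × Fin 4 → ℝ) : ℝ := q (2, 1) + q (2, 3) + q (3, 1) + q (3, 3)

/-- `P(S=0 | T=1)` -/
noncomputable def pE (q : Fin 4 × Fin 4 → ℝ) : ℝ :=
  q (0, 0) + q (0, 1) + q (0, 2) + q (0, 3) + q (2, 0) + q (2, 1) + q (2, 2) + q (2, 3)

/-- `γ = ACE(S → Y)` -/
noncomputable def gam (q : Fin 4 × Fin 4 → ℝ) : ℝ :=
  (q (0, 1) + q (1, 1) + q (2, 1) + q (3, 1)) - (q (0, 2) + q (1, 2) + q (2, 2) + q (3, 2))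

/-- `ACE(T → Y)` -/
noncomputable def ace (q : Fin 4 × Fin 4 → ℝ) : ℝ := q (2, 2) + q (1, 1) - q (1, 2) - q (2, 1)

theorem stmt5 :
    ∃ q q' : Fin 4 × Fin 4 → ℝ,
      (∀ p, 0 ≤ q p) ∧ (∀ p, 0 ≤ q' p) ∧
      (∑ p : Fin 4 × Fin 4, q p = 1) ∧ (∑ p : Fin 4 × Fin 4, q' p = 1) ∧
      pA q = pA q' ∧ pB q = pB q' ∧ pC q = pC q' ∧ pD q = pD q' ∧ pE q = pE q' ∧
      gam q = 0.2 ∧ gam q' = 0.2 ∧ (0.2 : ℝ) > 0 ∧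
      ace q = 0.14 ∧ ace q' = -0.10 := by
  refine ⟨fun p => if p = (0,0) then 0.36 else if p = (1,1) then 0.24
    else if p = (1,2) then 0.10 else if p = (3,1) then 0.06 else if p = (3,3) then 0.24 else 0,
    fun p => if p = (0,0) then 0.36 else if p = (1,0) then 0.24
    else if p = (1,2) then 0.10 else if p = (3,1) then 0.30 else 0, ?_, ?_, ?_, ?_, ?_, ?_, ?_, ?_, ?_, ?_, ?_, ?_, ?_, ?_⟩
  · intro p; dsimp only; split <;> norm_num <;> split <;> norm_num <;> split <;> norm_num <;> split <;> norm_num <;> split <;> norm_num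
  · intro p; dsimp only; split <;> norm_num <;> split <;> norm_num <;> split <;> norm_num <;> split <;> norm_num
  · simp [Fintype.sum_prod_type, Fin.sum_univ_four, Prod.ext_iff]; norm_num
  · simp [Fintype.sum_prod_type, Fin.sum_univ_four, Prod.ext_iff]; norm_num
  all_goals simp [pA, pB, pC, pD, pE, gam, ace, Prod.ext_iff]; try norm_num
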